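/- Let r > 0, B = B_r(0), and let A ⊆ ℝ² be any bounded open set. Then ‖I_A − I_B‖_{L¹}² ≤ 4π Q(A; B); that is, |A △ B|² ≤ 4π ∫_{A △ B} | |x|² − r² | dx. -/

import Mathlib

open MeasureTheory Metric

/-- The plane `ℝ²`. -/
abbrev Plane := EuclideanSpace ℝ (Fin 2)

/-- The mass `|A|` of a set: its two-dimensional Lebesgue measure. -/
noncomputable def mass (A : Set Plane) : ℝ := (volume A).toReal

/-- The momentum `M(A) = ∫_A x dx`. -/
noncomputable def mom (A : Set Plane) : Plane := ∫ x in A, x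

/-- The angular momentum `i(A) = ∫_A |x|² dx`. -/
noncomputable def angMom (A : Set Plane) : ℝ := ∫ x in A, ‖x‖ ^ 2

/-- `Q(A; B_r(x₀)) = ∫_{A △ B_r(x₀)} | |x − x₀|² − r² | dx`. -/
noncomputable def Qfun (A : Set Plane) (x₀ : Plane) (r : ℝ) : ℝ :=
  ∫ x in symmDiff A (ball x₀ r), |‖x - x₀‖ ^ 2 - r ^ 2|

lemma vol_ball {s : ℝ} (hs : 0 ≤ s) :
    volume (ball (0 : Plane) s) = ENNReal.ofReal (Real.pi * s ^ 2) := by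
  rw [EuclideanSpace.volume_ball]
  simp only [Fintype.card_fin]
  rw [show ((2:ℕ):ℝ)/2 + 1 = 2 by norm_num, Real.Gamma_two,
    Real.sq_sqrt Real.pi_nonneg, ← ENNReal.ofReal_pow hs, ← ENNReal.ofReal_mul (by positivity)]
  ring_nf

lemma vol_closedBall {s : ℝ} (hs : 0 ≤ s) :
    volume (closedBall (0 : Plane) s) = ENNReal.ofReal (Real.pi * s ^ 2) := by
  rw [Measure.addHaar_closedBall_eq_addHaar_ball, vol_ball hs]

lemma level_bound (r t : ℝ) (ht : 0 < t) :
    volume {x : Plane | |‖x‖ ^ 2 - r ^ 2| ≤ t} ≤ ENNReal.ofReal (2 * Real.pi * t) := by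
  set s₁ := Real.sqrt (r ^ 2 - t)
  set s₂ := Real.sqrt (r ^ 2 + t)
  have hsub : {x : Plane | |‖x‖ ^ 2 - r ^ 2| ≤ t} ⊆ closedBall 0 s₂ \ ball 0 s₁ := by
    intro x hx
    rw [Set.mem_setOf_eq, abs_le] at hx
    constructor
    · rw [mem_closedBall_zero_iff]
      have : ‖x‖ = Real.sqrt (‖x‖ ^ 2) := (Real.sqrt_sq (norm_nonneg x)).symm
      rw [this]
      exact Real.sqrt_le_sqrt (by linarith [hx.2])
    · show x ∉ ball 0 s₁
      rw [mem_ball_zero_iff, not_lt]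
      have : ‖x‖ = Real.sqrt (‖x‖ ^ 2) := (Real.sqrt_sq (norm_nonneg x)).symm
      rw [this]
      exact Real.sqrt_le_sqrt (by linarith [hx.1])
  refine le_trans (measure_mono hsub) ?_
  rw [measure_diff (ball_subset_closedBall.trans (closedBall_subset_closedBall
        (Real.sqrt_le_sqrt (by linarith)))) measurableSet_ball.nullMeasurableSet
      (by rw [vol_ball (Real.sqrt_nonneg _)]; exact ENNReal.ofReal_ne_top),
    vol_closedBall (Real.sqrt_nonneg _), vol_ball (Real.sqrt_nonneg _)]
  rw [tsub_le_iff_right, ← ENNReal.ofReal_add (by positivity) (by positivity)]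
  apply ENNReal.ofReal_le_ofReal
  rw [Real.sq_sqrt (by nlinarith [sq_nonneg r] : (0:ℝ) ≤ r ^ 2 + t)]
  rcases le_or_gt 0 (r ^ 2 - t) with h | h
  · rw [Real.sq_sqrt h]; nlinarith [Real.pi_pos]
  · rw [Real.sqrt_eq_zero_of_nonpos h.le]; nlinarith [Real.pi_pos]

/-- For `r > 0`, `B = B_r(0)`, and any bounded open set `A ⊆ ℝ²`:
`‖I_A − I_B‖_{L¹}² ≤ 4π Q(A; B)`, i.e. `|A △ B|² ≤ 4π ∫_{A △ B} ||x|² − r²| dx`. -/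
theorem stmt9 (r : ℝ) (hr : 0 < r) (A : Set Plane) (hA : IsOpen A)
    (hAb : Bornology.IsBounded A) :
    (mass (symmDiff A (ball (0 : Plane) r))) ^ 2 ≤ 4 * Real.pi * Qfun A 0 r := by
  have hπ := Real.pi_pos
  set S := symmDiff A (ball (0 : Plane) r) with hSdef
  have hSm : MeasurableSet S := hA.measurableSet.symmDiff measurableSet_ball
  have hSb : Bornology.IsBounded S :=
    (hAb.union isBounded_ball).subset Set.symmDiff_subset_union
  obtain ⟨R, hR⟩ := hSb.subset_closedBall 0
  have hSfin : volume S ≠ ⊤ :=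
    ((measure_mono hR).trans_lt (measure_closedBall_lt_top)).ne
  set m := mass S with hm
  have hm0 : 0 ≤ m := ENNReal.toReal_nonneg
  have hvolS : volume S = ENNReal.ofReal m := (ENNReal.ofReal_toReal hSfin).symm
  set f : Plane → ℝ := fun x => |‖x‖ ^ 2 - r ^ 2| with hfdef
  have hf_cont : Continuous f := ((continuous_norm.pow 2).sub continuous_const).abs
  have hf_meas : Measurable f := hf_cont.measurable
  have hQ : Qfun A 0 r = ∫ x in S, f x := by
    unfold Qfun
    simp only [sub_zero]
    rfl
  have hint : IntegrableOn f S := by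
    exact (hf_cont.continuousOn.integrableOn_compact (isCompact_closedBall (0:Plane) R)).mono_set hR
  have hQnn : 0 ≤ Qfun A 0 r := by
    rw [hQ]; exact setIntegral_nonneg hSm fun x _ => abs_nonneg _
  -- lintegral form
  have hQl : ENNReal.ofReal (Qfun A 0 r) = ∫⁻ x in S, ENNReal.ofReal (f x) := by
    rw [hQ]
    exact ofReal_integral_eq_lintegral_ofReal hint
      (Filter.Eventually.of_forall fun x => abs_nonneg _)
  have layer : ∫⁻ x in S, ENNReal.ofReal (f x) =
      ∫⁻ t in Set.Ioi (0:ℝ), (volume.restrict S) {a | t < f a} :=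
    lintegral_eq_lintegral_meas_lt _ (Filter.Eventually.of_forall fun x => abs_nonneg _)
      hf_meas.aemeasurable
  set T := m / (2 * Real.pi) with hT
  have hT0 : 0 ≤ T := by positivity
  -- pointwise bound
  have hpt : ∀ t ∈ Set.Ioo (0:ℝ) T,
      ENNReal.ofReal (m - 2 * Real.pi * t) ≤ (volume.restrict S) {a | t < f a} := by
    intro t ht
    rw [Measure.restrict_apply (measurableSet_lt measurable_const hf_meas)]
    have hsplit : volume S ≤ volume ({a | t < f a} ∩ S) + volume {x : Plane | f x ≤ t} := by
      refine le_trans (measure_mono ?_) (measure_union_le _ _)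
      intro x hx
      rcases le_or_gt (f x) t with h | h
      · exact Or.inr h
      · exact Or.inl ⟨h, hx⟩
    have hlev := level_bound r t ht.1
    rw [ENNReal.ofReal_sub _ (by nlinarith [ht.1, Real.pi_pos]), ← hvolS]
    rw [tsub_le_iff_right]
    exact hsplit.trans (add_le_add le_rfl hlev)
  -- chain
  have key : ENNReal.ofReal (m ^ 2 / (4 * Real.pi)) ≤ ENNReal.ofReal (Qfun A 0 r) := by
    rw [hQl, layer]
    have step1 : ∫⁻ t in Set.Ioo (0:ℝ) T, ENNReal.ofReal (m - 2 * Real.pi * t) ≤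
        ∫⁻ t in Set.Ioi (0:ℝ), (volume.restrict S) {a | t < f a} := by
      refine le_trans ?_ (lintegral_mono_set (Set.Ioo_subset_Ioi_self : Set.Ioo (0:ℝ) T ⊆ Set.Ioi 0))
      refine setLIntegral_mono' measurableSet_Ioo hpt
    refine le_trans ?_ step1
    have hintg : IntegrableOn (fun t => m - 2 * Real.pi * t) (Set.Ioo 0 T) := by
      exact ((continuous_const.sub (continuous_const.mul continuous_id)).continuousOn.integrableOn_compact
        isCompact_Icc).mono_set Set.Ioo_subset_Icc_self
    rw [← ofReal_integral_eq_lintegral_ofReal hintg ?_]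
    · apply ENNReal.ofReal_le_ofReal
      have : ∫ t in Set.Ioo (0:ℝ) T, (m - 2 * Real.pi * t) =
          ∫ t in (0:ℝ)..T, (m - 2 * Real.pi * t) := by
        rw [intervalIntegral.integral_of_le hT0, integral_Ioc_eq_integral_Ioo]
      rw [this, intervalIntegral.integral_sub intervalIntegrable_const
        (intervalIntegral.intervalIntegrable_id.const_mul (2 * Real.pi)),
        intervalIntegral.integral_const, intervalIntegral.integral_const_mul _ _,
        integral_id]
      apply le_of_eq
      rw [smul_eq_mul, hT]
      field_simp
      ring
    · filter_upwards [ae_restrict_mem measurableSet_Ioo] with t ht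
      have h1 : t ≤ m / (2 * Real.pi) := ht.2.le
      have h2 : 2 * Real.pi * t ≤ m := by
        rw [le_div_iff₀ (by positivity)] at h1
        linarith
      simp only [Pi.zero_apply]
      linarith
  rw [ENNReal.ofReal_le_ofReal_iff hQnn] at key
  rw [div_le_iff₀ (by positivity)] at key
  calc m ^ 2 ≤ Qfun A 0 r * (4 * Real.pi) := key
    _ = 4 * Real.pi * Qfun A 0 r := by ring
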